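/- Let Y ⊂ ℝ^{T−1} be a simplex code for T ≥ 2 classes and let φ : ℝ → ℝ be twice differentiable with φ'(t) < 0 and φ''(t) ≥ 0 for all t (strictly decreasing and convex). Let U ⊆ ℝ^Y be an open set of vectors with nonnegative coordinates and let h : U → ℝ^{T−1} be differentiable and satisfy the first-order optimality condition Σ_{j∈Y} p_j φ'(⟨h(p), j⟩) j = 0 for every p ∈ U (so h(p) is a critical point of w ↦ Φ(p, w) = Σ_{j∈Y} φ(⟨w, j⟩) p_j). Then for every p ∈ U and every y ∈ Y, the partial derivative of p ↦ ⟨h(p), y⟩ with respect to the coordinate p_y is nonnegative: ⟨∂h(p)/∂p_y, y⟩ ≥ 0. -/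

import Mathlib

open RealInnerProductSpace

/-- Let `y` be a simplex code for `T ≥ 2` classes and `φ : ℝ → ℝ`
twice differentiable, strictly decreasing (`φ' < 0`) and convex (`φ'' ≥ 0`).  Let
`U ⊆ ℝ^T` be an open set of vectors with nonnegative coordinates and `h : U → ℝ^{T-1}`
differentiable on `U`, satisfying the first-order optimality condition
`∑_j p_j φ'(⟪h p, y j⟫) • y j = 0` on `U` (so `h p` is a critical point of the inner
risk `w ↦ ∑_j φ(⟪w, y j⟫) p_j`).  Then for every `p ∈ U` and every class `i`, the
partial derivative of `p ↦ ⟪h p, y i⟫` in the coordinate `p_i` is nonnegative. -/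
theorem inner_risk_minimizer_monotone
    (T : ℕ) (hT : 2 ≤ T) (y : Fin T → EuclideanSpace ℝ (Fin (T - 1)))
    (hnorm : ∀ i, ‖y i‖ = 1)
    (hinner : ∀ i j, i ≠ j → ⟪y i, y j⟫ = -1 / ((T : ℝ) - 1))
    (φ φ' φ'' : ℝ → ℝ)
    (hd1 : ∀ t, HasDerivAt φ (φ' t) t)
    (hd2 : ∀ t, HasDerivAt φ' (φ'' t) t)
    (hφ' : ∀ t, φ' t < 0) (hφ'' : ∀ t, 0 ≤ φ'' t)
    (U : Set (Fin T → ℝ)) (hU : IsOpen U) (hUpos : ∀ p ∈ U, ∀ j, 0 ≤ p j)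
    (h : (Fin T → ℝ) → EuclideanSpace ℝ (Fin (T - 1)))
    (hdiff : ∀ p ∈ U, DifferentiableAt ℝ h p)
    (hopt : ∀ p ∈ U, ∑ j, (p j * φ' ⟪h p, y j⟫) • y j = 0)
    (p : Fin T → ℝ) (hp : p ∈ U) (i : Fin T) :
    0 ≤ ⟪fderiv ℝ h p (Pi.single i 1), y i⟫ := by
  classical
  have hhd : HasFDerivAt h (fderiv ℝ h p) p := (hdiff p hp).hasFDerivAt
  set v : EuclideanSpace ℝ (Fin (T - 1)) := fderiv ℝ h p (Pi.single i 1) with hv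
  set c : Fin T → ℝ := fun j => ⟪h p, y j⟫ with hc
  -- derivative of q ↦ ⟪h q, y j⟫
  have hinnerd : ∀ j : Fin T, HasFDerivAt (fun q => ⟪h q, y j⟫)
      (((innerSL ℝ (y j)) : EuclideanSpace ℝ (Fin (T-1)) →L[ℝ] ℝ).comp (fderiv ℝ h p)) p := by
    intro j
    have := ((innerSL ℝ (y j)).hasFDerivAt (x := h p)).comp p hhd
    refine this.congr_of_eventuallyEq (Filter.Eventually.of_forall fun q => ?_)
    simp only [Function.comp_apply, innerSL_apply_apply]
    exact real_inner_comm _ _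
  -- derivative of the scalar coefficient
  set c' : Fin T → ((Fin T → ℝ) →L[ℝ] ℝ) := fun j =>
    (p j) • ((φ'' (c j)) • (((innerSL ℝ (y j)) : EuclideanSpace ℝ (Fin (T-1)) →L[ℝ] ℝ).comp (fderiv ℝ h p)))
      + (φ' (c j)) • (ContinuousLinearMap.proj j : (Fin T → ℝ) →L[ℝ] ℝ) with hc'
  have hscal : ∀ j : Fin T, HasFDerivAt (fun q : Fin T → ℝ => q j * φ' ⟪h q, y j⟫) (c' j) p := by
    intro j
    have h1 : HasFDerivAt (fun q : Fin T → ℝ => q j)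
        (ContinuousLinearMap.proj j : (Fin T → ℝ) →L[ℝ] ℝ) p :=
      (ContinuousLinearMap.proj j : (Fin T → ℝ) →L[ℝ] ℝ).hasFDerivAt
    have h2 : HasFDerivAt (fun q : Fin T → ℝ => φ' ⟪h q, y j⟫)
        ((φ'' (c j)) • (((innerSL ℝ (y j)) : EuclideanSpace ℝ (Fin (T-1)) →L[ℝ] ℝ).comp (fderiv ℝ h p))) p :=
      (hd2 (c j)).comp_hasFDerivAt p (hinnerd j)
    exact h1.mul h2
  -- derivative of the optimality map
  have hG : HasFDerivAt (fun q : Fin T → ℝ => ∑ j, (q j * φ' ⟪h q, y j⟫) • y j)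
      (∑ j, (c' j).smulRight (y j)) p :=
    HasFDerivAt.fun_sum fun j _ => (hscal j).smul_const (y j)
  -- the map is eventually 0, so its derivative is 0
  have hzero : (∑ j, (c' j).smulRight (y j)) = 0 := by
    have hev : (fun q : Fin T → ℝ => ∑ j, (q j * φ' ⟪h q, y j⟫) • y j) =ᶠ[nhds p]
        (fun _ => (0 : EuclideanSpace ℝ (Fin (T-1)))) :=
      Filter.eventually_of_mem (hU.mem_nhds hp) fun q hq => hopt q hq
    have h0 : HasFDerivAt (fun _ : Fin T → ℝ => (0 : EuclideanSpace ℝ (Fin (T-1))))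
        (∑ j, (c' j).smulRight (y j)) p := hG.congr_of_eventuallyEq hev.symm
    exact h0.unique (hasFDerivAt_const _ _)
  -- apply at Pi.single i 1 and take inner with v
  have happ : ∑ j, (c' j (Pi.single i 1)) • y j = 0 := by
    have := congrArg (fun L => L (Pi.single i 1)) hzero
    simpa [ContinuousLinearMap.sum_apply] using this
  have hkey : ∑ j, (c' j (Pi.single i 1)) * ⟪y j, v⟫ = 0 := by
    have := congrArg (fun w => ⟪w, v⟫) happ
    simpa [sum_inner, inner_smul_left] using this
  have hcval : ∀ j, c' j (Pi.single i 1)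
      = p j * (φ'' (c j) * ⟪y j, v⟫) + φ' (c j) * (Pi.single i 1 : Fin T → ℝ) j := by
    intro j
    simp [hc', hv, real_inner_comm]
  have hsum : φ' (c i) * ⟪y i, v⟫ + ∑ j, p j * φ'' (c j) * ⟪y j, v⟫ ^ 2 = 0 := by
    rw [← hkey]
    rw [Finset.sum_congr rfl fun j _ => congrArg (· * ⟪y j, v⟫) (hcval j)]
    rw [Finset.sum_congr rfl fun j _ => add_mul _ _ _, Finset.sum_add_distrib]
    have : ∑ j, φ' (c j) * (Pi.single i 1 : Fin T → ℝ) j * ⟪y j, v⟫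
        = φ' (c i) * ⟪y i, v⟫ := by
      rw [Finset.sum_eq_single i]
      · simp
      · intro j _ hj; simp [Pi.single_apply, hj]
      · simp
    rw [this]
    ring_nf
  have hS : 0 ≤ ∑ j, p j * φ'' (c j) * ⟪y j, v⟫ ^ 2 :=
    Finset.sum_nonneg fun j _ => mul_nonneg (mul_nonneg (hUpos p hp j) (hφ'' _)) (sq_nonneg _)
  have : 0 ≤ ⟪y i, v⟫ := by nlinarith [hφ' (c i), hsum, hS]
  rw [real_inner_comm]
  exact this
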